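/- Let $X$ be a compact metric space and $f:X\to X$ a continuous map. For every $x\in X$, $i\ge0$ and $m\ge1$, it holds that $f^i(\overline{\omega}(x,f^m))=\overline{\omega}(f^i(x),f^m)$. -/

import Mathlib

open Filter Metric Set
open scoped Classical Topology

noncomputable def upperDensity (A : Set ℕ) : ℝ :=
  Filter.limsup
    (fun n : ℕ => (((Finset.range n).filter (fun i => i ∈ A)).card : ℝ) / n) Filter.atTop

def HasDensityOne (A : Set ℕ) : Prop :=
  Filter.Tendsto
    (fun n : ℕ => (((Finset.range n).filter (fun i => i ∈ A)).card : ℝ) / n) Filter.atTop (nhds 1)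

def omegaBarSeq {X : Type*} [MetricSpace X] (x : ℕ → X) : Set X :=
  {y | ∀ ε > 0, 0 < upperDensity {i | dist (x i) y < ε}}

def omegaBar {X : Type*} [MetricSpace X] (f : X → X) (x : X) : Set X :=
  omegaBarSeq (fun i => f^[i] x)

noncomputable def densFn (A : Set ℕ) (n : ℕ) : ℝ :=
  (((Finset.range n).filter (fun i => i ∈ A)).card : ℝ) / n

lemma upperDensity_eq (A : Set ℕ) : upperDensity A = Filter.limsup (densFn A) Filter.atTop := rfl

lemma densFn_nonneg (A : Set ℕ) (n : ℕ) : 0 ≤ densFn A n := by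
  unfold densFn; positivity

lemma densFn_le_one (A : Set ℕ) (n : ℕ) : densFn A n ≤ 1 := by
  unfold densFn
  apply div_le_one_of_le₀
  · exact_mod_cast (Finset.card_filter_le _ _).trans (Finset.card_range n).le
  · positivity

lemma densFn_bddAbove (A : Set ℕ) : IsBoundedUnder (· ≤ ·) atTop (densFn A) :=
  isBoundedUnder_of ⟨1, densFn_le_one A⟩

lemma densFn_bddBelow (A : Set ℕ) : IsBoundedUnder (· ≥ ·) atTop (densFn A) :=
  isBoundedUnder_of ⟨0, densFn_nonneg A⟩

lemma densFn_cobdd (A : Set ℕ) : IsCoboundedUnder (· ≤ ·) atTop (densFn A) :=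
  (densFn_bddBelow A).isCoboundedUnder_le

lemma densFn_div_mono {a b n : ℕ} (h : a ≤ b) : (a:ℝ)/n ≤ (b:ℝ)/n := by
  have hc : (0:ℝ) ≤ (n:ℝ)⁻¹ := by positivity
  rw [div_eq_mul_inv, div_eq_mul_inv]
  exact mul_le_mul_of_nonneg_right (by exact_mod_cast h) hc

lemma ud_mono {A B : Set ℕ} (h : A ⊆ B) : upperDensity A ≤ upperDensity B := by
  rw [upperDensity_eq, upperDensity_eq]
  apply limsup_le_limsup (Eventually.of_forall ?_) (densFn_cobdd A) (densFn_bddAbove B)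
  intro n
  refine densFn_div_mono (Finset.card_le_card ?_)
  intro j hj
  simp only [Finset.mem_filter] at *
  exact ⟨hj.1, h hj.2⟩

lemma ud_nonneg (A : Set ℕ) : 0 ≤ upperDensity A := by
  rw [upperDensity_eq]
  exact le_limsup_of_frequently_le (Frequently.of_forall fun n => densFn_nonneg A n)
    (densFn_bddAbove A)

lemma ud_empty : upperDensity (∅ : Set ℕ) = 0 := by
  rw [upperDensity_eq]
  have : densFn (∅ : Set ℕ) = fun _ => (0:ℝ) := by
    funext n; unfold densFn; simp
  rw [this, limsup_const]

lemma ud_pos_nonempty {A : Set ℕ} (h : 0 < upperDensity A) : ∃ j, j ∈ A := by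
  by_contra hc
  push_neg at hc
  have : A = ∅ := Set.eq_empty_iff_forall_notMem.2 hc
  rw [this, ud_empty] at h
  exact lt_irrefl _ h

lemma ud_union {A B : Set ℕ} : upperDensity (A ∪ B) ≤ upperDensity A + upperDensity B := by
  rw [upperDensity_eq, upperDensity_eq, upperDensity_eq]
  have h1 : limsup (densFn (A ∪ B)) atTop ≤ limsup (densFn A + densFn B) atTop := by
    apply limsup_le_limsup (Eventually.of_forall ?_) (densFn_cobdd _)
      (isBoundedUnder_of ⟨2, fun n => by
        have := densFn_le_one A n; have := densFn_le_one B n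
        simp only [Pi.add_apply]; linarith⟩)
    intro n
    simp only [Pi.add_apply]
    unfold densFn
    rw [← add_div]
    have hsub : (Finset.range n).filter (fun j => j ∈ A ∪ B)
        ⊆ ((Finset.range n).filter (fun j => j ∈ A)) ∪ ((Finset.range n).filter (fun j => j ∈ B)) := by
      intro j hj
      simp only [Finset.mem_filter, Finset.mem_union, Set.mem_union] at *
      tauto
    have hcard : ((Finset.range n).filter (fun j => j ∈ A ∪ B)).card
        ≤ ((Finset.range n).filter (fun j => j ∈ A)).card + ((Finset.range n).filter (fun j => j ∈ B)).card :=
      (Finset.card_le_card hsub).trans (Finset.card_union_le _ _)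
    have := densFn_div_mono (n := n) hcard
    push_cast at this ⊢
    convert this using 2 <;> norm_num <;> rfl
  have h2 : limsup (densFn A + densFn B) atTop ≤ limsup (densFn A) atTop + limsup (densFn B) atTop :=
    limsup_add_le (densFn_bddBelow A) (densFn_bddAbove A) (densFn_cobdd B) (densFn_bddAbove B)
  exact h1.trans h2

lemma ud_biUnion_le {ι : Type*} (s : Finset ι) (C : ι → Set ℕ) :
    upperDensity (⋃ c ∈ s, C c) ≤ ∑ c ∈ s, upperDensity (C c) := by
  classical
  induction s using Finset.induction with
  | empty => simp [ud_empty]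
  | @insert a s ha ih =>
      rw [Finset.set_biUnion_insert, Finset.sum_insert ha]
      exact ud_union.trans (add_le_add_right ih _)

lemma ud_pigeon {ι : Type*} {A : Set ℕ} (s : Finset ι) (B : ι → Set ℕ)
    (hA : A ⊆ ⋃ c ∈ s, B c) (h : 0 < upperDensity A) :
    ∃ c ∈ s, 0 < upperDensity (A ∩ B c) := by
  by_contra hc
  push_neg at hc
  have hle : ∀ c ∈ s, upperDensity (A ∩ B c) = 0 :=
    fun c hcs => le_antisymm (hc c hcs) (ud_nonneg _)
  have hsub : A ⊆ ⋃ c ∈ s, (A ∩ B c) := by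
    intro j hj
    obtain ⟨c, hcs, hjc⟩ := Set.mem_iUnion₂.1 (hA hj)
    exact Set.mem_iUnion₂.2 ⟨c, hcs, hj, hjc⟩
  have hfin := (ud_mono hsub).trans (ud_biUnion_le s _)
  rw [Finset.sum_eq_zero hle] at hfin
  linarith

lemma iterate_comm_apply {X : Type*} (f : X → X) (i m j : ℕ) (y : X) :
    f^[i] ((f^[m])^[j] y) = (f^[m])^[j] (f^[i] y) := by
  rw [← Function.iterate_mul, ← Function.iterate_add_apply, ← Function.iterate_add_apply,
    Nat.add_comm]

theorem stmt9 {X : Type*} [MetricSpace X] [CompactSpace X] (f : X → X) (hf : Continuous f)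
    (x : X) (i m : ℕ) (hm : 1 ≤ m) :
    f^[i] '' omegaBar (f^[m]) x = omegaBar (f^[m]) (f^[i] x) := by
  have hfi : Continuous (f^[i]) := hf.iterate i
  have huc := CompactSpace.uniformContinuous_of_continuous hfi
  rw [Metric.uniformContinuous_iff] at huc
  ext z
  simp only [Set.mem_image, omegaBar, omegaBarSeq, Set.mem_setOf_eq]
  constructor
  · rintro ⟨y, hy, rfl⟩
    intro ε hε
    obtain ⟨δ, hδ, hδε⟩ := huc ε hε
    refine lt_of_lt_of_le (hy δ hδ) (ud_mono ?_)
    intro j hj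
    simp only [Set.mem_setOf_eq] at *
    rw [← iterate_comm_apply]
    exact hδε hj
  · intro hz
    have hsel : ∀ n : ℕ, ∃ c : X,
        0 < upperDensity ({j | dist ((f^[m])^[j] (f^[i] x)) z < 1/(n+1)}
          ∩ {j | dist ((f^[m])^[j] x) c < 1/(n+1)}) := by
      intro n
      have hεn : (0:ℝ) < 1/(n+1) := by positivity
      have hA := hz (1/(n+1)) hεn
      obtain ⟨t, -, htfin, hcover⟩ := (isCompact_univ : IsCompact (Set.univ : Set X)).finite_cover_balls hεn
      have hsub : {j | dist ((f^[m])^[j] (f^[i] x)) z < 1/(n+1)}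
          ⊆ ⋃ c ∈ htfin.toFinset, {j | dist ((f^[m])^[j] x) c < 1/(n+1)} := by
        intro j _
        obtain ⟨c, hct, hcb⟩ := Set.mem_iUnion₂.1 (hcover (Set.mem_univ ((f^[m])^[j] x)))
        exact Set.mem_iUnion₂.2 ⟨c, htfin.mem_toFinset.2 hct, by
          simpa [Metric.mem_ball] using hcb⟩
      obtain ⟨c, -, hc⟩ := ud_pigeon htfin.toFinset _ hsub hA
      exact ⟨c, hc⟩
    choose y hy using hsel
    obtain ⟨w, φ, hφ, hlim⟩ := CompactSpace.tendsto_subseq y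
    have hφle : ∀ k, (1:ℝ)/(φ k + 1) ≤ 1/(k+1) := by
      intro k
      have : (k:ℝ) + 1 ≤ (φ k : ℝ) + 1 := by
        have h := hφ.id_le k
        exact_mod_cast Nat.add_le_add_right h 1
      exact one_div_le_one_div_of_le (by positivity) this
    refine ⟨w, ?_, ?_⟩
    · -- w ∈ omegaBar
      intro ε hε
      obtain ⟨K1, hK1⟩ := Metric.tendsto_atTop.1 hlim (ε/2) (by linarith)
      obtain ⟨K2, hK2⟩ := exists_nat_one_div_lt (show (0:ℝ) < ε/2 by linarith)
      set k := max K1 K2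
      have h1 : dist (y (φ k)) w < ε/2 := hK1 k (le_max_left _ _)
      have h2 : (1:ℝ)/(φ k + 1) < ε/2 := by
        refine lt_of_le_of_lt ((hφle k).trans ?_) hK2
        exact one_div_le_one_div_of_le (by positivity)
          (by push_cast; exact_mod_cast Nat.add_le_add_right (le_max_right K1 K2) 1)
      refine lt_of_lt_of_le (hy (φ k)) (ud_mono ?_)
      rintro j ⟨-, hj2⟩
      simp only [Set.mem_setOf_eq] at *
      calc dist ((f^[m])^[j] x) w ≤ dist ((f^[m])^[j] x) (y (φ k)) + dist (y (φ k)) w :=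
            dist_triangle _ _ _
        _ < ε/2 + ε/2 := by
            have := hj2.trans h2
            linarith
        _ = ε := by ring
    · -- f^[i] w = z
      have key : ∀ ε > (0:ℝ), dist (f^[i] w) z ≤ 0 + ε := by
        intro ε hε
        obtain ⟨δ, hδ, hδε⟩ := huc (ε/3) (by linarith)
        have hlim2 : Tendsto (fun k => f^[i] (y (φ k))) atTop (𝓝 (f^[i] w)) :=
          (hfi.tendsto w).comp hlim
        obtain ⟨K1, hK1⟩ := Metric.tendsto_atTop.1 hlim2 (ε/3) (by linarith)
        obtain ⟨K2, hK2⟩ := exists_nat_one_div_lt (lt_min hδ (by linarith : (0:ℝ) < ε/3))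
        set k := max K1 K2
        have hsmall : (1:ℝ)/(φ k + 1) < min δ (ε/3) := by
          refine lt_of_le_of_lt ((hφle k).trans ?_) hK2
          exact one_div_le_one_div_of_le (by positivity)
            (by push_cast; exact_mod_cast Nat.add_le_add_right (le_max_right K1 K2) 1)
        obtain ⟨j, hj1, hj2⟩ := ud_pos_nonempty (hy (φ k))
        simp only [Set.mem_setOf_eq] at hj1 hj2
        have e1 : dist (f^[i] w) (f^[i] (y (φ k))) < ε/3 := by
          rw [dist_comm]; exact hK1 k (le_max_left _ _)
        have e2 : dist (f^[i] (y (φ k))) (f^[i] ((f^[m])^[j] x)) < ε/3 := by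
          apply hδε
          rw [dist_comm]
          exact hj2.trans (hsmall.trans_le (min_le_left _ _))
        have e3 : dist (f^[i] ((f^[m])^[j] x)) z < ε/3 := by
          rw [iterate_comm_apply]
          exact hj1.trans (hsmall.trans_le (min_le_right _ _))
        have := (dist_triangle4 (f^[i] w) (f^[i] (y (φ k))) (f^[i] ((f^[m])^[j] x)) z)
        linarith
      have h0 : dist (f^[i] w) z ≤ 0 := le_of_forall_pos_le_add key
      exact dist_le_zero.1 h0
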